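/- Let I ⊆ ZZ × ℤ be a finite subposet whose counterpart I^{ℤ²} is an interval of ℤ². Then every minimal element and every maximal element of I with respect to the ZZ × ℤ order lies on the boundary B_I^{ℤ²}. -/

import Mathlib

open CategoryTheory CategoryTheory.Limits
open scoped ENNReal

noncomputable section

/-- A subposet `S` is connected if any two of its points are joined by a zigzag of
comparabilities inside `S`. -/
def PosetConn {α : Type*} [Preorder α] (S : Set α) : Prop :=
  ∀ p ∈ S, ∀ q ∈ S,
    Relation.ReflTransGen (fun a b => a ∈ S ∧ b ∈ S ∧ (a ≤ b ∨ b ≤ a)) p q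

/-- An interval of a poset: a connected convex subposet. -/
def IsIntervalIn {α : Type*} [Preorder α] (S : Set α) : Prop :=
  PosetConn S ∧ S.OrdConnected

/-- The zigzag poset `ZZ`, the subposet of `ℤᵒᵖ × ℤ` of points `(i,j)` with `j ∈ {i, i-1}`. -/
def ZZSet : Set (ℤᵒᵈ × ℤ) :=
  {p | p.2 = OrderDual.ofDual p.1 ∨ p.2 = OrderDual.ofDual p.1 - 1}

/-- The quasi zigzag poset `ZZ × ℤ` with the product order. -/
def QZ : Type := ↥ZZSet × ℤ

instance : PartialOrder QZ := inferInstanceAs (PartialOrder (↥ZZSet × ℤ))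

/-- the `ZZ`-component of a point of the quasi zigzag poset -/
def QZ.zz (p : QZ) : ↥ZZSet := (show ↥ZZSet × ℤ from p).1

/-- the `ℤ`-component of a point of the quasi zigzag poset -/
def QZ.t (p : QZ) : ℤ := (show ↥ZZSet × ℤ from p).2

/-- The identification of `ZZ × ℤ` with `ℤ²` as sets: consecutive elements of `ZZ`
are indexed by consecutive x-coordinates. -/
def toZ2 (p : QZ) : ℤ × ℤ := (OrderDual.ofDual p.zz.val.1 + p.zz.val.2, p.t)

/-- the `∞`-distance on `ℤ²` -/
def dInf (a b : ℤ × ℤ) : ℤ := max |a.1 - b.1| |a.2 - b.2|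

/-- the `δ`-square of points of `ZZ × ℤ` centered at the `ℤ²`-point `c` -/
def sqAt (c : ℤ × ℤ) (δ : ℤ) : Set QZ := {z | dInf c (toZ2 z) ≤ δ}

/-- The worm centered at `p` with width `δ`: the union of the `δ`-square at `p` with the
`δ`-squares centered at `p ± (δ, -δ)`. -/
def worm (p : QZ) (δ : ℤ) : Set QZ :=
  sqAt (toZ2 p) δ ∪ sqAt (toZ2 p + (δ, -δ)) δ ∪ sqAt (toZ2 p - (δ, -δ)) δ

lemma center_mem_worm (p : QZ) {δ : ℤ} (hδ : 0 ≤ δ) : p ∈ worm p δ :=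
  Or.inl (Or.inl (by simp [sqAt, dInf, hδ]))

/-- the set of minimal elements of a subposet -/
def minsOf {α : Type*} [PartialOrder α] (S : Set α) : Set α :=
  {p ∈ S | ∀ q ∈ S, q ≤ p → q = p}

/-- the set of maximal elements of a subposet -/
def maxsOf {α : Type*} [PartialOrder α] (S : Set α) : Set α :=
  {p ∈ S | ∀ q ∈ S, p ≤ q → q = p}

/-- `b` covers `a` within the subposet `S` -/
def covIn {α : Type*} [PartialOrder α] (S : Set α) (a b : α) : Prop :=
  a ∈ S ∧ b ∈ S ∧ a < b ∧ ∀ c ∈ S, a < c → c < b → False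

/-- a covering path from `p` to `q` within `S` whose set of points is `P`:
a sequence of covering relations, either all increasing or all decreasing -/
def IsCovPath {α : Type*} [PartialOrder α] (S : Set α) (p q : α) (P : Set α) : Prop :=
  ∃ l : List α,
    (List.Chain' (covIn S) l ∨ List.Chain' (fun a b => covIn S b a) l) ∧
    l.head? = some p ∧ l.getLast? = some q ∧ {x | x ∈ l} = P

/-- the lower fence of `S ⊆ ℤ²`: covering paths through the least upper bounds of
consecutive minima, the minima being sorted by increasing x-coordinate -/
def IsLowerFence (S F : Set (ℤ × ℤ)) : Prop :=
  ∃ l : List (ℤ × ℤ), l.Nodup ∧ {x | x ∈ l} = minsOf S ∧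
    l.Chain' (fun a b => a.1 < b.1) ∧
    ∃ P₁ P₂ : ℤ × ℤ → ℤ × ℤ → Set (ℤ × ℤ),
      (∀ ab ∈ l.zip l.tail, IsCovPath S ab.1 (ab.1 ⊔ ab.2) (P₁ ab.1 ab.2) ∧
        IsCovPath S (ab.1 ⊔ ab.2) ab.2 (P₂ ab.1 ab.2)) ∧
      F = {x | x ∈ l} ∪ ⋃ ab ∈ {ab | ab ∈ l.zip l.tail}, (P₁ ab.1 ab.2 ∪ P₂ ab.1 ab.2)

/-- the upper fence of `S ⊆ ℤ²`: covering paths through the greatest lower bounds of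
consecutive maxima, the maxima being sorted by increasing x-coordinate -/
def IsUpperFence (S F : Set (ℤ × ℤ)) : Prop :=
  ∃ l : List (ℤ × ℤ), l.Nodup ∧ {x | x ∈ l} = maxsOf S ∧
    l.Chain' (fun a b => a.1 < b.1) ∧
    ∃ P₁ P₂ : ℤ × ℤ → ℤ × ℤ → Set (ℤ × ℤ),
      (∀ ab ∈ l.zip l.tail, IsCovPath S ab.1 (ab.1 ⊓ ab.2) (P₁ ab.1 ab.2) ∧
        IsCovPath S (ab.1 ⊓ ab.2) ab.2 (P₂ ab.1 ab.2)) ∧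
      F = {x | x ∈ l} ∪ ⋃ ab ∈ {ab | ab ∈ l.zip l.tail}, (P₁ ab.1 ab.2 ∪ P₂ ab.1 ab.2)

/-- The boundary `B_I` of `S ⊆ ℤ²`: the lower fence, the upper fence, a covering path from
the leftmost minimum `p₀` to the leftmost maximum `q₀` through the top-left corner, and a
covering path from the rightmost minimum `p_s` to the rightmost maximum `q_t` through the
bottom-right corner. -/
def IsBoundary (S B : Set (ℤ × ℤ)) : Prop :=
  ∃ LF UF PL PR : Set (ℤ × ℤ), IsLowerFence S LF ∧ IsUpperFence S UF ∧
    (∃ p₀ q₀, (p₀ ∈ minsOf S ∧ ∀ r ∈ minsOf S, p₀.1 ≤ r.1) ∧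
      (q₀ ∈ maxsOf S ∧ ∀ r ∈ maxsOf S, q₀.1 ≤ r.1) ∧
      IsCovPath S p₀ q₀ PL ∧ (p₀.1, q₀.2) ∈ PL) ∧
    (∃ ps qt, (ps ∈ minsOf S ∧ ∀ r ∈ minsOf S, r.1 ≤ ps.1) ∧
      (qt ∈ maxsOf S ∧ ∀ r ∈ maxsOf S, r.1 ≤ qt.1) ∧
      IsCovPath S ps qt PR ∧ (qt.1, ps.2) ∈ PR) ∧
    B = LF ∪ UF ∪ PL ∪ PR

/-- a path inside `B` connecting all points of `T` -/
def Connects (B T D : Set (ℤ × ℤ)) : Prop := D ⊆ B ∧ T ⊆ D ∧ PosetConn D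

/-- a minimal path inside `B` connecting all points of `T` -/
def IsMinimalConnector (B T D : Set (ℤ × ℤ)) : Prop :=
  Connects B T D ∧ ∀ D' ⊆ D, Connects B T D' → D' = D

section AuxA
variable {S : Set (ℤ × ℤ)}

lemma btw (hconv : S.OrdConnected) {p q r : ℤ × ℤ} (hp : p ∈ S) (hr : r ∈ S)
    (h1 : p ≤ q) (h2 : q ≤ r) : q ∈ S := hconv.out hp hr ⟨h1, h2⟩

lemma covIn_unit (hconv : S.OrdConnected) {a b : ℤ × ℤ} (h : covIn S a b) :
    b = (a.1 + 1, a.2) ∨ b = (a.1, a.2 + 1) := by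
  obtain ⟨ha, hb, hab, hmin⟩ := h
  obtain ⟨h1, h2⟩ := Prod.le_def.mp hab.le
  have hne : a ≠ b := hab.ne
  rcases lt_or_eq_of_le h1 with hx | hx
  · rcases lt_or_eq_of_le h2 with hy | hy
    · exfalso
      exact hmin (b.1, a.2) (btw hconv ha hb ⟨h1, le_refl _⟩ ⟨le_refl _, h2⟩)
        (Prod.lt_iff.mpr (Or.inl ⟨hx, le_refl _⟩))
        (Prod.lt_iff.mpr (Or.inr ⟨le_refl _, hy⟩))
    · -- horizontal
      left
      rcases lt_or_eq_of_le (show a.1 + 1 ≤ b.1 by omega) with hx2 | hx2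
      · exfalso
        exact hmin (a.1 + 1, a.2) (btw hconv ha hb ⟨by omega, le_refl _⟩ ⟨by omega, hy.le⟩)
          (Prod.lt_iff.mpr (Or.inl ⟨by omega, le_refl _⟩))
          (Prod.lt_iff.mpr (Or.inl ⟨by omega, hy.le⟩))
      · exact Prod.ext hx2.symm hy.symm
  · right
    have hy : a.2 < b.2 := by
      rcases lt_or_eq_of_le h2 with hy | hy
      · exact hy
      · exact absurd (Prod.ext hx hy) hne
    rcases lt_or_eq_of_le (show a.2 + 1 ≤ b.2 by omega) with hy2 | hy2
    · exfalso
      exact hmin (a.1, a.2 + 1) (btw hconv ha hb ⟨le_refl _, by omega⟩ ⟨hx.le, by omega⟩)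
        (Prod.lt_iff.mpr (Or.inr ⟨le_refl _, by omega⟩))
        (Prod.lt_iff.mpr (Or.inr ⟨hx.le, by omega⟩))
    · exact Prod.ext hx.symm hy2.symm

end AuxA


section Lists
variable {α : Type*}

lemma pairwise_head_rel {R : α → α → Prop} {L : List α} (h : L.Pairwise R) {p x : α}
    (hp : L.head? = some p) (hx : x ∈ L) : x = p ∨ R p x := by
  cases L with
  | nil => simp at hx
  | cons a t =>
    simp only [List.head?_cons, Option.some.injEq] at hp
    subst hp
    rcases List.mem_cons.mp hx with h1 | h1
    · exact Or.inl h1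
    · exact Or.inr (List.rel_of_pairwise_cons h h1)

lemma pairwise_last_rel {R : α → α → Prop} {L : List α} (h : L.Pairwise R) {q x : α}
    (hq : L.getLast? = some q) (hx : x ∈ L) : x = q ∨ R x q := by
  have h' : L.reverse.Pairwise (fun a b => R b a) :=
    List.pairwise_reverse.mpr h
  have := pairwise_head_rel h' (by rw [List.head?_reverse]; exact hq)
    (List.mem_reverse.mpr hx)
  exact this

lemma pairwise_total {R : α → α → Prop} {L : List α} (h : L.Pairwise R) {a b : α}
    (ha : a ∈ L) (hb : b ∈ L) : a = b ∨ R a b ∨ R b a := by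
  induction L with
  | nil => simp at ha
  | cons x t ih =>
    rcases List.pairwise_cons.mp h with ⟨hx, ht⟩
    rcases List.mem_cons.mp ha with h1 | h1 <;> rcases List.mem_cons.mp hb with h2 | h2
    · exact Or.inl (h1.trans h2.symm)
    · exact Or.inr (Or.inl (h1 ▸ hx b h2))
    · exact Or.inr (Or.inr (h2 ▸ hx a h1))
    · exact ih ht h1 h2

lemma zip_rel {R : α → α → Prop} : ∀ {l : List α} {x y : α}, List.Chain' R l →
    (x, y) ∈ l.zip l.tail → R x y := by
  intro l
  induction l with
  | nil => intro x y _ h; simp at h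
  | cons a t ih =>
    intro x y hch hm
    cases t with
    | nil => simp at hm
    | cons b t' =>
      simp only [List.tail_cons, List.zip_cons_cons, List.mem_cons, Prod.mk.injEq] at hm
      rcases hm with ⟨rfl, rfl⟩ | hm
      · exact (List.isChain_cons_cons.mp hch).1
      · exact ih (List.isChain_cons_cons.mp hch).2 hm

lemma mem_zip_or_last : ∀ {l : List α} {x : α}, x ∈ l →
    l.getLast? = some x ∨ ∃ y, (x, y) ∈ l.zip l.tail := by
  intro l
  induction l with
  | nil => intro x hx; simp at hx
  | cons a t ih =>
    intro x hx
    cases t with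
    | nil =>
      left
      simp only [List.mem_singleton] at hx
      simp [hx]
    | cons b t' =>
      rcases List.mem_cons.mp hx with rfl | h1
      · exact Or.inr ⟨b, by simp⟩
      · rcases ih h1 with h2 | ⟨y, h2⟩
        · left; rw [List.getLast?_cons_cons]; exact h2
        · right; exact ⟨y, by simp only [List.tail_cons, List.zip_cons_cons, List.mem_cons]; exact Or.inr h2⟩

lemma mem_zip_or_head : ∀ {l : List α} {x : α}, x ∈ l →
    l.head? = some x ∨ ∃ y, (y, x) ∈ l.zip l.tail := by
  intro l
  induction l with
  | nil => intro x hx; simp at hx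
  | cons a t ih =>
    intro x hx
    cases t with
    | nil =>
      left
      simp only [List.mem_singleton] at hx
      simp [hx]
    | cons b t' =>
      rcases List.mem_cons.mp hx with rfl | h1
      · left; rfl
      · rcases ih h1 with h2 | ⟨y, h2⟩
        · right
          refine ⟨a, ?_⟩
          simp only [List.head?_cons, Option.some.injEq] at h2
          subst h2
          simp
        · right; exact ⟨y, by simp only [List.tail_cons, List.zip_cons_cons, List.mem_cons]; exact Or.inr h2⟩

end Lists


section AuxB
variable {S : Set (ℤ × ℤ)}

lemma chain'_pairwise_lt {L : List (ℤ × ℤ)} (h : List.Chain' (covIn S) L) :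
    L.Pairwise (· < ·) :=
  List.isChain_iff_pairwise.mp (List.IsChain.imp (fun a b hc => hc.2.2.1) h)

lemma chain_mem_S : ∀ {L : List (ℤ × ℤ)}, List.Chain' (covIn S) L → 2 ≤ L.length →
    ∀ r ∈ L, r ∈ S := by
  intro L
  induction L with
  | nil => intro _ h; simp at h
  | cons a t ih =>
    intro hch hlen r hr
    cases t with
    | nil => simp at hlen
    | cons b t' =>
      obtain ⟨hab, hch'⟩ := List.isChain_cons_cons.mp hch
      rcases List.mem_cons.mp hr with rfl | hr'
      · exact hab.1
      · cases t' with
        | nil =>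
          simp only [List.mem_singleton] at hr'
          exact hr' ▸ hab.2.1
        | cons c t'' => exact ih hch' (by simp only [List.length_cons]; omega) r hr'

lemma chain_columns (hconv : S.OrdConnected) :
    ∀ {L : List (ℤ × ℤ)} {p q : ℤ × ℤ}, List.Chain' (covIn S) L →
    L.head? = some p → L.getLast? = some q →
    ∀ a : ℤ, p.1 ≤ a → a ≤ q.1 → ∃ r ∈ L, r.1 = a := by
  intro L
  induction L with
  | nil => intro p q _ hp; simp at hp
  | cons x t ih =>
    intro p q hch hp hq a h1 h2
    simp only [List.head?_cons, Option.some.injEq] at hp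
    subst hp
    cases t with
    | nil =>
      simp only [List.getLast?_singleton, Option.some.injEq] at hq
      subst hq
      exact ⟨x, List.mem_cons_self, by omega⟩
    | cons y t' =>
      obtain ⟨hxy, hch'⟩ := List.isChain_cons_cons.mp hch
      rcases eq_or_lt_of_le h1 with rfl | h1'
      · exact ⟨x, List.mem_cons_self, rfl⟩
      · have hy1 : y.1 ≤ a := by
          rcases covIn_unit hconv hxy with h | h <;> rw [h] <;> simp <;> omega
        have hq' : (y :: t').getLast? = some q := by
          rw [← hq, List.getLast?_cons_cons]
        obtain ⟨r, hr, hr1⟩ := ih hch' rfl hq' a hy1 h2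
        exact ⟨r, List.mem_cons_of_mem _ hr, hr1⟩

/-- Master structure lemma for covering paths, increasing case. -/
lemma incPath (hconv : S.OrdConnected) {p q : ℤ × ℤ} {P : Set (ℤ × ℤ)}
    (h : IsCovPath S p q P) (hne : p ≠ q) (hnle : ¬ q ≤ p) :
    (∀ r ∈ P, r ∈ S) ∧ (∀ r ∈ P, p ≤ r ∧ r ≤ q) ∧
    (∀ a : ℤ, p.1 ≤ a → a ≤ q.1 → ∃ r ∈ P, r.1 = a) ∧
    (∀ C ∈ P, ∀ r ∈ P, r ≤ C ∨ C ≤ r) := by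
  obtain ⟨L, hch, hh, hl, hP⟩ := h
  have hpL : p ∈ L := by
    cases L with
    | nil => simp at hh
    | cons x t => simp only [List.head?_cons, Option.some.injEq] at hh; exact hh ▸ List.mem_cons_self
  have hqL : q ∈ L := by
    obtain ⟨hne', he⟩ := List.mem_getLast?_eq_getLast (by rw [hl]; rfl : q ∈ L.getLast?)
    exact he ▸ List.getLast_mem hne'
  rcases hch with hch | hch
  swap
  · exfalso
    have hrev : List.Chain' (covIn S) L.reverse := by
      exact List.isChain_reverse.mpr hch
    have hpw := chain'_pairwise_lt hrev
    have hhh : L.reverse.head? = some q := by rw [List.head?_reverse]; exact hl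
    rcases pairwise_head_rel hpw hhh (List.mem_reverse.mpr hpL) with h1 | h1
    · exact hne h1
    · exact hnle h1.le
  · have hpw := chain'_pairwise_lt hch
    have hlen : 2 ≤ L.length := by
      cases L with
      | nil => simp at hh
      | cons x t =>
        cases t with
        | nil =>
          exfalso
          simp only [List.head?_cons, Option.some.injEq] at hh
          simp only [List.getLast?_singleton, Option.some.injEq] at hl
          exact hne (hh ▸ hl ▸ rfl)
        | cons y t' => simp only [List.length_cons]; omega
    subst hP
    refine ⟨fun r hr => chain_mem_S hch hlen r hr, fun r hr => ?_, ?_, ?_⟩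
    · constructor
      · rcases pairwise_head_rel hpw hh hr with rfl | h1
        · exact le_refl _
        · exact h1.le
      · rcases pairwise_last_rel hpw hl hr with rfl | h1
        · exact le_refl _
        · exact h1.le
    · exact fun a h1 h2 => chain_columns hconv hch hh hl a h1 h2
    · intro C hC r hr
      rcases pairwise_total hpw hr hC with rfl | h1 | h1
      · exact Or.inl (le_refl _)
      · exact Or.inl h1.le
      · exact Or.inr h1.le

/-- a covering path whose two endpoints lie on a horizontal line is the full row -/
lemma row_of_path (hconv : S.OrdConnected) {p q : ℤ × ℤ} {P : Set (ℤ × ℤ)}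
    (h : IsCovPath S p q P) (hx : p.1 < q.1) (hy : p.2 = q.2) :
    ∀ a : ℤ, p.1 ≤ a → a ≤ q.1 → (a, p.2) ∈ P := by
  have hne : p ≠ q := fun e => by rw [e] at hx; omega
  have hnle : ¬ q ≤ p := fun e => by have := (Prod.le_def.mp e).1; omega
  obtain ⟨hS, hbd, hcol, _⟩ := incPath hconv h hne hnle
  intro a h1 h2
  obtain ⟨r, hr, hr1⟩ := hcol a h1 h2
  obtain ⟨hpr, hrq⟩ := hbd r hr
  have e1 : r.2 = p.2 := le_antisymm (hy ▸ (Prod.le_def.mp hrq).2) (Prod.le_def.mp hpr).2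
  have : r = (a, p.2) := Prod.ext hr1 e1
  exact this ▸ hr

/-- path from p to q through the corner (p.1, q.2) covers the top row -/
lemma toprow_of_path (hconv : S.OrdConnected) {p q : ℤ × ℤ} {P : Set (ℤ × ℤ)}
    (h : IsCovPath S p q P) (hne : p ≠ q) (hnle : ¬ q ≤ p) (hC : (p.1, q.2) ∈ P) :
    ∀ a : ℤ, p.1 ≤ a → a ≤ q.1 → (a, q.2) ∈ P := by
  obtain ⟨hS, hbd, hcol, htot⟩ := incPath hconv h hne hnle
  intro a h1 h2
  rcases eq_or_lt_of_le h1 with rfl | h1'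
  · exact hC
  · obtain ⟨r, hr, hr1⟩ := hcol a h1 h2
    rcases htot _ hC r hr with h3 | h3
    · exfalso; have := (Prod.le_def.mp h3).1; simp at this; omega
    · have e1 : r.2 = q.2 := le_antisymm (Prod.le_def.mp (hbd r hr).2).2
        (by simpa using (Prod.le_def.mp h3).2)
      have : r = (a, q.2) := Prod.ext hr1 e1
      exact this ▸ hr

/-- path from p to q through the corner (q.1, p.2) covers the bottom row -/
lemma botrow_of_path (hconv : S.OrdConnected) {p q : ℤ × ℤ} {P : Set (ℤ × ℤ)}
    (h : IsCovPath S p q P) (hne : p ≠ q) (hnle : ¬ q ≤ p) (hC : (q.1, p.2) ∈ P) :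
    ∀ a : ℤ, p.1 ≤ a → a ≤ q.1 → (a, p.2) ∈ P := by
  obtain ⟨hS, hbd, hcol, htot⟩ := incPath hconv h hne hnle
  intro a h1 h2
  rcases eq_or_lt_of_le h2 with rfl | h2'
  · exact hC
  · obtain ⟨r, hr, hr1⟩ := hcol a h1 h2
    rcases htot _ hC r hr with h3 | h3
    · have e1 : r.2 = p.2 := le_antisymm (by simpa using (Prod.le_def.mp h3).2)
        (Prod.le_def.mp (hbd r hr).1).2
      have : r = (a, p.2) := Prod.ext hr1 e1
      exact this ▸ hr
    · exfalso; have := (Prod.le_def.mp h3).1; simp at this; omega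

/-- degenerate path: if the endpoints coincide and the endpoint is extremal,
the path is a single point -/
lemma path_self {p : ℤ × ℤ} {P : Set (ℤ × ℤ)}
    (h : IsCovPath S p p P) : P = {p} := by
  obtain ⟨L, hch, hh, hl, hP⟩ := h
  subst hP
  ext r
  simp only [Set.mem_setOf_eq, Set.mem_singleton_iff]
  constructor
  · intro hr
    rcases hch with hch | hch
    · have hpw := chain'_pairwise_lt hch
      rcases pairwise_head_rel hpw hh hr with h1 | h1
      · exact h1
      rcases pairwise_last_rel hpw hl hr with h2 | h2
      · exact h2
      · exact absurd h2 (lt_asymm h1)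
    · have hrev : List.Chain' (covIn S) L.reverse := by
        exact List.isChain_reverse.mpr hch
      have hpw := chain'_pairwise_lt hrev
      have hhh : L.reverse.head? = some p := by rw [List.head?_reverse]; exact hl
      have hlll : L.reverse.getLast? = some p := by rw [List.getLast?_reverse]; exact hh
      have hr' := List.mem_reverse.mpr hr
      rcases pairwise_head_rel hpw hhh hr' with h1 | h1
      · exact h1
      rcases pairwise_last_rel hpw hlll hr' with h2 | h2
      · exact h2
      · exact absurd h2 (lt_asymm h1)
  · rintro rfl
    cases L with
    | nil => simp at hh
    | cons x t =>
      simp only [List.head?_cons, Option.some.injEq] at hh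
      exact hh ▸ List.mem_cons_self

end AuxB


section Main
variable {S : Set (ℤ × ℤ)}

lemma exists_le_max (hfin : S.Finite) {z : ℤ × ℤ} (hz : z ∈ S) :
    ∃ w ∈ maxsOf S, z ≤ w := by
  obtain ⟨w, hw, hmax⟩ := Set.Finite.exists_maximalFor (fun w : ℤ × ℤ => w.1 + w.2)
    {w ∈ S | z ≤ w} (hfin.subset (Set.sep_subset _ _)) ⟨z, hz, le_refl _⟩
  refine ⟨w, ⟨hw.1, fun u hu hle => ?_⟩, hw.2⟩
  obtain ⟨h1, h2⟩ := Prod.le_def.mp hle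
  have := hmax (j := u) ⟨hu, le_trans hw.2 hle⟩ (by dsimp only; omega)
  dsimp only at this
  exact Prod.ext (by omega) (by omega)

lemma exists_min_le (hfin : S.Finite) {z : ℤ × ℤ} (hz : z ∈ S) :
    ∃ w ∈ minsOf S, w ≤ z := by
  obtain ⟨w, hw, hmax⟩ := Set.Finite.exists_maximalFor (fun w : ℤ × ℤ => -(w.1 + w.2))
    {w ∈ S | w ≤ z} (hfin.subset (Set.sep_subset _ _)) ⟨z, hz, le_refl _⟩
  refine ⟨w, ⟨hw.1, fun u hu hle => ?_⟩, hw.2⟩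
  obtain ⟨h1, h2⟩ := Prod.le_def.mp hle
  have := hmax (j := u) ⟨hu, le_trans hle hw.2⟩ (by dsimp only; omega)
  dsimp only at this
  exact Prod.ext (by omega) (by omega)

lemma bottom_mem_boundary (hfin : S.Finite) (hconv : S.OrdConnected) {B : Set (ℤ × ℤ)}
    (hB : IsBoundary S B) {a t : ℤ} (haS : (a, t) ∈ S) (hbot : (a, t - 1) ∉ S) :
    (a, t) ∈ B := by
  obtain ⟨LF, UF, PL, PR, hLF, hUF, ⟨p₀, q₀, hp₀, hq₀, hPL, hCL⟩,
    ⟨ps, qt, hps, hqt, hPR, hCR⟩, rfl⟩ := hB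
  set Pd : ℤ → Prop :=
    fun b => b ≤ a ∧ ∀ a', b ≤ a' → a' ≤ a → (a', t) ∈ S ∧ (a', t - 1) ∉ S with hPd
  have hPda : Pd a := ⟨le_refl _, fun a' h1 h2 => by
    have he : a' = a := le_antisymm h2 h1
    rw [he]; exact ⟨haS, hbot⟩⟩
  have hbdd : ∃ b, ∀ z, Pd z → b ≤ z := by
    obtain ⟨lb, hlb⟩ := (hfin.image Prod.fst).bddBelow
    exact ⟨lb, fun z hz => hlb ⟨(z, t), (hz.2 z (le_refl _) hz.1).1, rfl⟩⟩
  obtain ⟨c, ⟨hca, hrange⟩, hcleast⟩ := Int.exists_least_of_bdd hbdd ⟨a, hPda⟩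
  have hcS : (c, t) ∈ S := (hrange c (le_refl _) hca).1
  have hleft : (c - 1, t) ∉ S := by
    intro hmem
    have hstep : (c - 1, t - 1) ∉ S := fun hmem' =>
      (hrange c (le_refl _) hca).2
        (btw hconv hmem' haS (Prod.le_def.mpr ⟨by omega, le_refl _⟩)
          (Prod.le_def.mpr ⟨hca, by omega⟩))
    have hPdc : Pd (c - 1) := by
      refine ⟨by omega, fun a' h1 h2 => ?_⟩
      rcases eq_or_lt_of_le h1 with he | h1'
      · rw [← he]; exact ⟨hmem, hstep⟩
      · exact hrange a' (by omega) h2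
    have := hcleast _ hPdc; omega
  have hminS : (c, t) ∈ minsOf S := by
    refine ⟨hcS, fun q hq hle => ?_⟩
    obtain ⟨h1, h2⟩ := Prod.le_def.mp hle
    rcases eq_or_lt_of_le h2 with he | h2'
    · rcases eq_or_lt_of_le h1 with he1 | h1'
      · exact Prod.ext he1 he
      · exact absurd (btw hconv hq hcS (Prod.le_def.mpr ⟨by omega, by omega⟩)
          (Prod.le_def.mpr ⟨by omega, by omega⟩)) hleft
    · exact absurd (btw hconv hq hcS
        (show q ≤ ((c, t - 1) : ℤ × ℤ) from Prod.le_def.mpr ⟨h1, by omega⟩)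
        (Prod.le_def.mpr ⟨le_refl _, by omega⟩)) ((hrange c (le_refl _) hca).2)
  obtain ⟨l, hnd, hset, hsort, P₁, P₂, hpaths, hFeq⟩ := hLF
  have hcl : (c, t) ∈ l := by
    rw [show ((c, t) ∈ l) = ((c, t) ∈ {x | x ∈ l}) from rfl, hset]; exact hminS
  haveI : IsTrans (ℤ × ℤ) (fun a b : ℤ × ℤ => a.1 < b.1) :=
    ⟨fun a b c h1 h2 => lt_trans h1 h2⟩
  have hpwx : l.Pairwise (fun a b : ℤ × ℤ => a.1 < b.1) := List.isChain_iff_pairwise.mp hsort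
  rcases mem_zip_or_last hcl with hlast | ⟨p', hzip⟩
  · -- (c,t) is the rightmost minimum, so it equals ps; use PR
    have hpsl : ps ∈ l := by
      rw [show (ps ∈ l) = (ps ∈ {x | x ∈ l}) from rfl, hset]; exact hps.1
    have h1 : ps.1 ≤ c := by
      rcases pairwise_last_rel hpwx hlast hpsl with he | hlt
      · rw [he]
      · exact hlt.le
    have h2 : c ≤ ps.1 := hps.2 (c, t) hminS
    have hps_eq : ps = (c, t) := by
      rcases le_total ps.2 t with h3 | h3
      · exact hminS.2 ps hps.1.1 (Prod.le_def.mpr ⟨by omega, h3⟩)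
      · exact (hps.1.2 (c, t) hminS.1 (Prod.le_def.mpr ⟨by omega, h3⟩)).symm
    have haqt : a ≤ qt.1 := by
      obtain ⟨w, hw, hzw⟩ := exists_le_max hfin haS
      exact le_trans (Prod.le_def.mp hzw).1 (hqt.2 w hw)
    by_cases hpq : ps = qt
    · have hPReq : PR = {ps} := path_self (by rw [hpq] at hPR ⊢; exact hPR)
      rw [hPReq] at hCR
      have hq0 : ((qt.1, ps.2) : ℤ × ℤ) = ps := Set.mem_singleton_iff.mp hCR
      have hq1 : qt.1 = ps.1 := by rw [← hq0]
      have hac : a = c := by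
        have := hps_eq ▸ hq1
        omega
      refine Or.inl (Or.inl (Or.inl ?_))
      rw [hFeq]
      exact Or.inl (by rw [hac]; exact hcl)
    · have hnle : ¬ qt ≤ ps := fun h => hpq ((hps.1.2 qt hqt.1.1 h).symm)
      have hrow := botrow_of_path hconv hPR (fun e => hpq e) hnle hCR
      have hmem : (a, ps.2) ∈ PR := hrow a (by rw [hps_eq]; exact hca) haqt
      have hps2 : ps.2 = t := congrArg Prod.snd hps_eq
      exact Or.inr (by rw [← hps2]; exact hmem)
  · -- (c,t) has a successor minimum p'
    have hx' := zip_rel hsort hzip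
    have hx : c < p'.1 := hx'
    have hp'l : p' ∈ l := List.mem_of_mem_tail (List.of_mem_zip hzip).2
    have hp'min : p' ∈ minsOf S := by
      rw [show (p' ∈ l) = (p' ∈ {x | x ∈ l}) from rfl, hset] at hp'l; exact hp'l
    have hp'2 : p'.2 < t := by
      by_contra h
      push_neg at h
      have := hp'min.2 (c, t) hminS.1 (Prod.le_def.mpr ⟨hx.le, h⟩)
      have := congrArg Prod.fst this
      simp at this; omega
    have hsup : (c, t) ⊔ p' = (p'.1, t) := by
      have he : (c, t) ⊔ p' = (max c p'.1, max t p'.2) := rfl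
      rw [he]
      exact Prod.ext (by simp; omega) (by simp; omega)
    obtain ⟨hpath1, _⟩ := hpaths ((c, t), p') hzip
    rw [hsup] at hpath1
    have hap' : a ≤ p'.1 := by
      by_contra h
      push_neg at h
      have h5 := hrange p'.1 (by omega) (by omega)
      exact h5.2 (btw hconv hp'min.1 h5.1 (Prod.le_def.mpr ⟨le_refl _, by omega⟩)
        (Prod.le_def.mpr ⟨le_refl _, by omega⟩))
    have hrow := row_of_path hconv hpath1 (by exact hx) rfl a hca hap'
    refine Or.inl (Or.inl (Or.inl ?_))
    rw [hFeq]
    exact Or.inr (Set.mem_biUnion hzip (Or.inl hrow))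


lemma top_mem_boundary (hfin : S.Finite) (hconv : S.OrdConnected) {B : Set (ℤ × ℤ)}
    (hB : IsBoundary S B) {a t : ℤ} (haS : (a, t) ∈ S) (htop : (a, t + 1) ∉ S) :
    (a, t) ∈ B := by
  obtain ⟨LF, UF, PL, PR, hLF, hUF, ⟨p₀, q₀, hp₀, hq₀, hPL, hCL⟩,
    ⟨ps, qt, hps, hqt, hPR, hCR⟩, rfl⟩ := hB
  set Pd : ℤ → Prop :=
    fun b => a ≤ b ∧ ∀ a', a ≤ a' → a' ≤ b → (a', t) ∈ S ∧ (a', t + 1) ∉ S with hPd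
  have hPda : Pd a := ⟨le_refl _, fun a' h1 h2 => by
    have he : a' = a := le_antisymm h2 h1
    rw [he]; exact ⟨haS, htop⟩⟩
  have hbdd : ∃ b, ∀ z, Pd z → z ≤ b := by
    obtain ⟨ub, hub⟩ := (hfin.image Prod.fst).bddAbove
    exact ⟨ub, fun z hz => hub ⟨(z, t), (hz.2 z hz.1 (le_refl _)).1, rfl⟩⟩
  obtain ⟨c, ⟨hca, hrange⟩, hcgreat⟩ := Int.exists_greatest_of_bdd hbdd ⟨a, hPda⟩
  have hcS : (c, t) ∈ S := (hrange c hca (le_refl _)).1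
  have hright : (c + 1, t) ∉ S := by
    intro hmem
    have hstep : (c + 1, t + 1) ∉ S := fun hmem' =>
      (hrange c hca (le_refl _)).2
        (btw hconv haS hmem' (Prod.le_def.mpr ⟨hca, by omega⟩)
          (Prod.le_def.mpr ⟨by omega, le_refl _⟩))
    have hPdc : Pd (c + 1) := by
      refine ⟨by omega, fun a' h1 h2 => ?_⟩
      rcases eq_or_lt_of_le h2 with he | h2'
      · rw [he]; exact ⟨hmem, hstep⟩
      · exact hrange a' h1 (by omega)
    have := hcgreat _ hPdc; omega
  have hmaxS : (c, t) ∈ maxsOf S := by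
    refine ⟨hcS, fun q hq hle => ?_⟩
    obtain ⟨h1, h2⟩ := Prod.le_def.mp hle
    rcases eq_or_lt_of_le h2 with he | h2'
    · rcases eq_or_lt_of_le h1 with he1 | h1'
      · exact (Prod.ext he1 he).symm
      · exact absurd (btw hconv hcS hq (Prod.le_def.mpr ⟨by omega, by omega⟩)
          (Prod.le_def.mpr ⟨by omega, by omega⟩)) hright
    · exact absurd (btw hconv hcS hq
        (show ((c, t) : ℤ × ℤ) ≤ ((c, t + 1) : ℤ × ℤ) from Prod.le_def.mpr ⟨le_refl _, by omega⟩)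
        (Prod.le_def.mpr ⟨h1, by omega⟩)) ((hrange c hca (le_refl _)).2)
  obtain ⟨l, hnd, hset, hsort, Q₁, Q₂, hpaths, hFeq⟩ := hUF
  have hcl : (c, t) ∈ l := by
    rw [show ((c, t) ∈ l) = ((c, t) ∈ {x | x ∈ l}) from rfl, hset]; exact hmaxS
  haveI : IsTrans (ℤ × ℤ) (fun a b : ℤ × ℤ => a.1 < b.1) :=
    ⟨fun a b c h1 h2 => lt_trans h1 h2⟩
  have hpwx : l.Pairwise (fun a b : ℤ × ℤ => a.1 < b.1) := List.isChain_iff_pairwise.mp hsort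
  rcases mem_zip_or_head hcl with hhead | ⟨q'', hzip⟩
  · -- (c,t) is the leftmost maximum, so it equals q₀; use PL
    have hq0l : q₀ ∈ l := by
      rw [show (q₀ ∈ l) = (q₀ ∈ {x | x ∈ l}) from rfl, hset]; exact hq₀.1
    have h1 : c ≤ q₀.1 := by
      rcases pairwise_head_rel hpwx hhead hq0l with he | hlt
      · rw [he]
      · exact hlt.le
    have h2 : q₀.1 ≤ c := hq₀.2 (c, t) hmaxS
    have hq0_eq : q₀ = (c, t) := by
      rcases le_total q₀.2 t with h3 | h3
      · exact (hq₀.1.2 (c, t) hmaxS.1 (Prod.le_def.mpr ⟨by omega, h3⟩)).symm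
      · exact hmaxS.2 q₀ hq₀.1.1 (Prod.le_def.mpr ⟨by omega, h3⟩)
    have hap0 : p₀.1 ≤ a := by
      obtain ⟨w, hw, hwz⟩ := exists_min_le hfin haS
      exact le_trans (hp₀.2 w hw) (Prod.le_def.mp hwz).1
    by_cases hpq : p₀ = q₀
    · have hac : a = c := by
        have := hpq ▸ hq0_eq
        have h4 := congrArg Prod.fst this
        simp at h4
        omega
      refine Or.inl (Or.inl (Or.inr ?_))
      rw [hFeq]
      exact Or.inl (by rw [hac]; exact hcl)
    · have hnle : ¬ q₀ ≤ p₀ := fun h => hpq (hp₀.1.2 q₀ hq₀.1.1 h).symm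
      have hrow := toprow_of_path hconv hPL hpq hnle hCL
      have hmem : (a, q₀.2) ∈ PL := hrow a hap0 (by rw [hq0_eq]; exact hca)
      have hq02 : q₀.2 = t := congrArg Prod.snd hq0_eq
      exact Or.inl (Or.inr (by rw [← hq02]; exact hmem))
  · -- (c,t) has a predecessor maximum q''
    have hx' := zip_rel hsort hzip
    have hx : q''.1 < c := hx'
    have hq''l : q'' ∈ l := (List.of_mem_zip hzip).1
    have hq''max : q'' ∈ maxsOf S := by
      rw [show (q'' ∈ l) = (q'' ∈ {x | x ∈ l}) from rfl, hset] at hq''l; exact hq''l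
    have hq''2 : t < q''.2 := by
      by_contra h
      push_neg at h
      have := hq''max.2 (c, t) hmaxS.1 (Prod.le_def.mpr ⟨hx.le, h⟩)
      have := congrArg Prod.fst this
      simp at this; omega
    have hinf : q'' ⊓ (c, t) = (q''.1, t) := by
      have he : q'' ⊓ (c, t) = (min q''.1 c, min q''.2 t) := rfl
      rw [he]
      exact Prod.ext (by simp; omega) (by simp; omega)
    obtain ⟨_, hpath2⟩ := hpaths (q'', (c, t)) hzip
    rw [hinf] at hpath2
    have haq'' : q''.1 < a := by
      by_contra h
      push_neg at h
      have h5 := hrange q''.1 h (by omega)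
      exact h5.2 (btw hconv h5.1 hq''max.1 (Prod.le_def.mpr ⟨le_refl _, by omega⟩)
        (Prod.le_def.mpr ⟨le_refl _, by omega⟩))
    have hrow := row_of_path hconv hpath2 (by exact hx) rfl a haq''.le hca
    refine Or.inl (Or.inl (Or.inr ?_))
    rw [hFeq]
    exact Or.inr (Set.mem_biUnion hzip (Or.inr hrow))

end Main


lemma toZ2_fst_inj {p q : QZ} (h : (toZ2 q).1 = (toZ2 p).1) : q.zz = p.zz := by
  have hq := q.zz.2
  have hp := p.zz.2
  simp only [ZZSet, Set.mem_setOf_eq] at hq hp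
  have h' : OrderDual.ofDual (QZ.zz q).val.1 + (QZ.zz q).val.2
      = OrderDual.ofDual (QZ.zz p).val.1 + (QZ.zz p).val.2 := h
  have h1 : OrderDual.ofDual (QZ.zz q).val.1 = OrderDual.ofDual (QZ.zz p).val.1 := by omega
  have h2 : (QZ.zz q).val.2 = (QZ.zz p).val.2 := by omega
  exact Subtype.ext (Prod.ext (OrderDual.ofDual.injective h1) h2)



/-- For a finite subposet `I ⊆ ZZ × ℤ` whose `ℤ²`-counterpart is an
interval, every minimal and every maximal element of `I` (w.r.t. the `ZZ × ℤ` order) lies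
on the boundary `B_I^{ℤ²}`. -/
theorem statement_5 (I : Set QZ) (hfin : I.Finite) (hI : IsIntervalIn (toZ2 '' I))
    (B : Set (ℤ × ℤ)) (hB : IsBoundary (toZ2 '' I) B) :
    toZ2 '' (minsOf I ∪ maxsOf I) ⊆ B := by
  rintro x ⟨p, hp, rfl⟩
  have hfinS : (toZ2 '' I).Finite := hfin.image _
  have hconv : (toZ2 '' I).OrdConnected := hI.2
  have hmem : ((toZ2 p).1, (toZ2 p).2) ∈ toZ2 '' I := ⟨p, by
    rcases hp with hp | hp
    · exact hp.1
    · exact hp.1, rfl⟩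
  rcases hp with hp | hp
  · have hnb : (((toZ2 p).1, (toZ2 p).2 - 1) : ℤ × ℤ) ∉ toZ2 '' I := by
      rintro ⟨q, hqI, hq⟩
      obtain ⟨h1, h2⟩ := Prod.ext_iff.mp hq
      have hzz : q.zz = p.zz := toZ2_fst_inj h1
      have ht : QZ.t q = QZ.t p - 1 := h2
      have hle : q ≤ p := by
        have h3 : ((QZ.zz q, QZ.t q) : ↥ZZSet × ℤ) ≤ (QZ.zz p, QZ.t p) :=
          Prod.le_def.mpr ⟨le_of_eq hzz, by omega⟩
        exact h3
      have heq := hp.2 q hqI hle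
      have := congrArg QZ.t heq
      omega
    exact bottom_mem_boundary hfinS hconv hB hmem hnb
  · have hnb : (((toZ2 p).1, (toZ2 p).2 + 1) : ℤ × ℤ) ∉ toZ2 '' I := by
      rintro ⟨q, hqI, hq⟩
      obtain ⟨h1, h2⟩ := Prod.ext_iff.mp hq
      have hzz : q.zz = p.zz := toZ2_fst_inj h1
      have ht : QZ.t q = QZ.t p + 1 := h2
      have hle : p ≤ q := by
        have h3 : ((QZ.zz p, QZ.t p) : ↥ZZSet × ℤ) ≤ (QZ.zz q, QZ.t q) :=
          Prod.le_def.mpr ⟨le_of_eq hzz.symm, by omega⟩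
        exact h3
      have heq := hp.2 q hqI hle
      have := congrArg QZ.t heq
      omega
    exact top_mem_boundary hfinS hconv hB hmem hnb

end
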